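/- For the 3-qubit W state |W⟩ = (|100⟩ + |010⟩ + |001⟩)/√3, the squared entanglement eigenvalue equals 4/9, hence E_G(W) = 5/9. -/

import Mathlib

open scoped BigOperators
open Matrix

/-- The set of unit-norm fully separable pure states of `n` qubits. -/
def SepStates (n : ℕ) : Set ((Fin n → Fin 2) → ℂ) :=
  {φ | ∃ v : Fin n → (Fin 2 → ℂ),
    (∀ i, ∑ x : Fin 2, Complex.normSq (v i x) = 1) ∧
    ∀ f : Fin n → Fin 2, φ f = ∏ i : Fin n, v i (f i)}

/-- Geometric measure of entanglement. -/
noncomputable def GeomEnt (n : ℕ) (ψ : (Fin n → Fin 2) → ℂ) : ℝ :=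
  1 - sSup {r : ℝ | ∃ φ ∈ SepStates n, r = (‖star φ ⬝ᵥ ψ‖)^2}

/-- The 3-qubit W state `(|100⟩+|010⟩+|001⟩)/√3`: the coefficient is `1/√3`
exactly on bit strings of Hamming weight one. -/
noncomputable def Wstate : (Fin 3 → Fin 2) → ℂ :=
  fun f => if ∃ i : Fin 3, f i = 1 ∧ ∀ j : Fin 3, j ≠ i → f j = 0 then
    (1 / Real.sqrt 3 : ℝ) else 0

set_option maxHeartbeats 1000000

lemma dot_W (g : (Fin 3 → Fin 2) → ℂ) :
    star g ⬝ᵥ Wstate = ((1 / Real.sqrt 3 : ℝ) : ℂ) *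
      (star (g ![1,0,0]) + star (g ![0,1,0]) + star (g ![0,0,1])) := by
  classical
  have hzero : ∀ f ∈ (Finset.univ : Finset (Fin 3 → Fin 2)),
      f ∉ ({![1,0,0], ![0,1,0], ![0,0,1]} : Finset (Fin 3 → Fin 2)) →
      star (g f) * Wstate f = 0 := by
    intro f _ hf
    have hW : Wstate f = 0 := by
      rw [Wstate, if_neg]
      rintro ⟨i, h1, h2⟩
      apply hf
      have hfe : f = fun j => if j = i then 1 else 0 := by
        funext j
        by_cases h : j = i
        · simp [h, h1]
        · simp [h, h2 j h]
      subst hfe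
      fin_cases i <;> simp [Finset.mem_insert] <;> decide
    simp [hW]
  have := Finset.sum_subset (Finset.subset_univ
      ({![1,0,0], ![0,1,0], ![0,0,1]} : Finset (Fin 3 → Fin 2)))
      (fun f hf hnf => hzero f hf hnf)
  rw [dotProduct]
  simp only [Pi.star_apply]
  rw [← this]
  rw [Finset.sum_insert (by decide), Finset.sum_insert (by decide), Finset.sum_singleton]
  have hW : ∀ f : Fin 3 → Fin 2, (∃ i : Fin 3, f i = 1 ∧ ∀ j : Fin 3, j ≠ i → f j = 0) →
      Wstate f = ((1 / Real.sqrt 3 : ℝ) : ℂ) := fun f h => by rw [Wstate, if_pos h]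
  rw [hW _ (by decide), hW _ (by decide), hW _ (by decide)]
  ring

lemma cube_ineq (x0 x1 x2 : ℝ) (h0n : 0 ≤ x0) (h1n : 0 ≤ x1) (h2n : 0 ≤ x2)
    (h0u : x0 ≤ 1) (h1u : x1 ≤ 1) (h2u : x2 ≤ 1) :
    (3-(x0+x1+x2))*(x1*x2 + x0*x2 + x0*x1) ≤ 4/3 := by
  have hq : x1*x2 + x0*x2 + x0*x1 ≤ (x0+x1+x2)^2/3 := by
    nlinarith [sq_nonneg (x0-x1), sq_nonneg (x1-x2), sq_nonneg (x0-x2)]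
  have hs : (3-(x0+x1+x2))*((x0+x1+x2)^2/3) ≤ 4/3 := by
    nlinarith [mul_nonneg (sq_nonneg (x0+x1+x2-2)) (show (0:ℝ) ≤ x0+x1+x2+1 by linarith)]
  have h3s : 0 ≤ 3 - (x0+x1+x2) := by linarith
  calc (3-(x0+x1+x2))*(x1*x2 + x0*x2 + x0*x1)
      ≤ (3-(x0+x1+x2))*((x0+x1+x2)^2/3) := mul_le_mul_of_nonneg_left hq h3s
    _ ≤ 4/3 := hs

lemma key_ineq (a0 a1 a2 b0 b1 b2 : ℝ)
    (h0 : a0^2 + b0^2 = 1) (h1 : a1^2 + b1^2 = 1) (h2 : a2^2 + b2^2 = 1) :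
    (b0*a1*a2 + a0*b1*a2 + a0*a1*b2)^2 ≤ 4/3 := by
  have hCS : (b0*a1*a2 + a0*b1*a2 + a0*a1*b2)^2 ≤
      (b0^2+b1^2+b2^2)*((a1*a2)^2+(a0*a2)^2+(a0*a1)^2) := by
    nlinarith [sq_nonneg (b0*(a0*a2) - b1*(a1*a2)), sq_nonneg (b0*(a0*a1) - b2*(a1*a2)),
      sq_nonneg (b1*(a0*a1) - b2*(a0*a2))]
  have hrhs : (b0^2+b1^2+b2^2)*((a1*a2)^2+(a0*a2)^2+(a0*a1)^2)
      = (3 - (a0^2+a1^2+a2^2)) * (a1^2*a2^2 + a0^2*a2^2 + a0^2*a1^2) := by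
    linear_combination ((a1*a2)^2+(a0*a2)^2+(a0*a1)^2) * (h0+h1+h2)
  have := cube_ineq (a0^2) (a1^2) (a2^2) (sq_nonneg _) (sq_nonneg _) (sq_nonneg _)
    (by nlinarith [sq_nonneg b0]) (by nlinarith [sq_nonneg b1]) (by nlinarith [sq_nonneg b2])
  linarith [hCS, hrhs ▸ hCS, this]

lemma sep_upper (v : Fin 3 → Fin 2 → ℂ)
    (hn : ∀ i, ∑ x : Fin 2, Complex.normSq (v i x) = 1)
    (φ : (Fin 3 → Fin 2) → ℂ) (hφ : ∀ f, φ f = ∏ i : Fin 3, v i (f i)) :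
    (‖star φ ⬝ᵥ Wstate‖)^2 ≤ 4/9 := by
  have hval : ∀ f : Fin 3 → Fin 2, φ f = v 0 (f 0) * v 1 (f 1) * v 2 (f 2) := by
    intro f; rw [hφ f, Fin.prod_univ_three]
  have h0 : φ ![1,0,0] = v 0 1 * v 1 0 * v 2 0 := by rw [hval]; rfl
  have h1 : φ ![0,1,0] = v 0 0 * v 1 1 * v 2 0 := by rw [hval]; rfl
  have h2 : φ ![0,0,1] = v 0 0 * v 1 0 * v 2 1 := by rw [hval]; rfl
  rw [dot_W, norm_mul]
  have hsq3 : Real.sqrt 3 ^ 2 = 3 := Real.sq_sqrt (by norm_num)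
  have hsq3' : (0:ℝ) < Real.sqrt 3 := Real.sqrt_pos.mpr (by norm_num)
  have habs1 : ‖((1 / Real.sqrt 3 : ℝ) : ℂ)‖ = 1 / Real.sqrt 3 := by
    rw [Complex.norm_real, Real.norm_eq_abs, abs_of_pos (by positivity)]
  rw [habs1, h0, h1, h2]
  set T := star (v 0 1 * v 1 0 * v 2 0) + star (v 0 0 * v 1 1 * v 2 0)
      + star (v 0 0 * v 1 0 * v 2 1) with hT
  have hTabs : ‖T‖ ≤
      ‖v 0 1‖ * ‖v 1 0‖ * ‖v 2 0‖
      + ‖v 0 0‖ * ‖v 1 1‖ * ‖v 2 0‖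
      + ‖v 0 0‖ * ‖v 1 0‖ * ‖v 2 1‖ := by
    calc ‖T‖ ≤ ‖star (v 0 1 * v 1 0 * v 2 0) + star (v 0 0 * v 1 1 * v 2 0)‖
          + ‖star (v 0 0 * v 1 0 * v 2 1)‖ := norm_add_le _ _
      _ ≤ ‖star (v 0 1 * v 1 0 * v 2 0)‖ + ‖star (v 0 0 * v 1 1 * v 2 0)‖
          + ‖star (v 0 0 * v 1 0 * v 2 1)‖ := by
            gcongr; exact norm_add_le _ _
      _ = _ := by
            simp only [Complex.star_def, Complex.norm_conj, norm_mul]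
  have hnn : ∀ i, ‖v i 0‖^2 + ‖v i 1‖^2 = 1 := by
    intro i
    have := hn i
    rw [Fin.sum_univ_two] at this
    rw [Complex.sq_norm, Complex.sq_norm, this]
  have hkey := key_ineq (‖v 0 0‖) (‖v 1 0‖) (‖v 2 0‖)
      (‖v 0 1‖) (‖v 1 1‖) (‖v 2 1‖)
      (hnn 0) (hnn 1) (hnn 2)
  have hT2 : ‖T‖ ^ 2 ≤ 4/3 := by
    have h := pow_le_pow_left₀ (norm_nonneg T) hTabs 2
    exact h.trans hkey
  have : (1 / Real.sqrt 3 * ‖T‖)^2 = (1/3) * ‖T‖ ^ 2 := by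
    rw [mul_pow, div_pow, one_pow, hsq3]
  rw [this]
  linarith

noncomputable def vOpt : Fin 3 → Fin 2 → ℂ :=
  fun _ x => if x = 0 then ((Real.sqrt 2 / Real.sqrt 3 : ℝ) : ℂ) else ((1 / Real.sqrt 3 : ℝ) : ℂ)

noncomputable def φOpt : (Fin 3 → Fin 2) → ℂ := fun f => ∏ i : Fin 3, vOpt i (f i)

lemma opt_mem : φOpt ∈ SepStates 3 ∧ (4/9 : ℝ) = (‖star φOpt ⬝ᵥ Wstate‖)^2 := by
  have hsq2 : Real.sqrt 2 ^ 2 = 2 := Real.sq_sqrt (by norm_num)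
  have hsq3 : Real.sqrt 3 ^ 2 = 3 := Real.sq_sqrt (by norm_num)
  have h3pos : (0:ℝ) < Real.sqrt 3 := Real.sqrt_pos.mpr (by norm_num)
  constructor
  · refine ⟨vOpt, fun i => ?_, fun f => rfl⟩
    rw [Fin.sum_univ_two]
    show Complex.normSq ((Real.sqrt 2 / Real.sqrt 3 : ℝ) : ℂ)
        + Complex.normSq ((1 / Real.sqrt 3 : ℝ) : ℂ) = 1
    rw [Complex.normSq_ofReal, Complex.normSq_ofReal]
    have : Real.sqrt 2 / Real.sqrt 3 * (Real.sqrt 2 / Real.sqrt 3) = 2/3 := by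
      rw [div_mul_div_comm, ← sq, ← sq, hsq2, hsq3]
    rw [this]
    have : (1 / Real.sqrt 3) * (1 / Real.sqrt 3) = 1/3 := by
      rw [div_mul_div_comm, Real.mul_self_sqrt (by norm_num : (0:ℝ) ≤ 3)]
      norm_num
    rw [this]; norm_num
  · rw [dot_W]
    have hval : ∀ f : Fin 3 → Fin 2, φOpt f = vOpt 0 (f 0) * vOpt 1 (f 1) * vOpt 2 (f 2) :=
      fun f => Fin.prod_univ_three _
    have hcomp : ∀ (g : Fin 3 → Fin 2), (∃ i, g i = 1) → True := fun _ _ => trivial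
    have h0 : φOpt ![1,0,0] = ((1 / Real.sqrt 3 * (Real.sqrt 2 / Real.sqrt 3)
        * (Real.sqrt 2 / Real.sqrt 3) : ℝ) : ℂ) := by
      rw [hval]; show ((1 / Real.sqrt 3 : ℝ):ℂ) * ((Real.sqrt 2 / Real.sqrt 3 : ℝ):ℂ)
        * ((Real.sqrt 2 / Real.sqrt 3 : ℝ):ℂ) = _
      push_cast; ring
    have h1 : φOpt ![0,1,0] = ((1 / Real.sqrt 3 * (Real.sqrt 2 / Real.sqrt 3)
        * (Real.sqrt 2 / Real.sqrt 3) : ℝ) : ℂ) := by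
      rw [hval]; show ((Real.sqrt 2 / Real.sqrt 3 : ℝ):ℂ) * ((1 / Real.sqrt 3 : ℝ):ℂ)
        * ((Real.sqrt 2 / Real.sqrt 3 : ℝ):ℂ) = _
      push_cast; ring
    have h2 : φOpt ![0,0,1] = ((1 / Real.sqrt 3 * (Real.sqrt 2 / Real.sqrt 3)
        * (Real.sqrt 2 / Real.sqrt 3) : ℝ) : ℂ) := by
      rw [hval]; show ((Real.sqrt 2 / Real.sqrt 3 : ℝ):ℂ) * ((Real.sqrt 2 / Real.sqrt 3 : ℝ):ℂ)
        * ((1 / Real.sqrt 3 : ℝ):ℂ) = _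
      push_cast; ring
    rw [h0, h1, h2]
    simp only [Complex.star_def, Complex.conj_ofReal]
    have c3 : ((Real.sqrt 3 : ℝ) : ℂ) * ((Real.sqrt 3 : ℝ) : ℂ) = 3 := by
      exact_mod_cast Real.mul_self_sqrt (by norm_num : (0:ℝ) ≤ 3)
    have c2 : ((Real.sqrt 2 : ℝ) : ℂ) * ((Real.sqrt 2 : ℝ) : ℂ) = 2 := by
      exact_mod_cast Real.mul_self_sqrt (by norm_num : (0:ℝ) ≤ 2)
    have c3ne : ((Real.sqrt 3 : ℝ) : ℂ) ≠ 0 := by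
      exact_mod_cast h3pos.ne'
    have this : ((1 / Real.sqrt 3 : ℝ) : ℂ) * (((1 / Real.sqrt 3 * (Real.sqrt 2 / Real.sqrt 3)
        * (Real.sqrt 2 / Real.sqrt 3) : ℝ) : ℂ) + ((1 / Real.sqrt 3 * (Real.sqrt 2 / Real.sqrt 3)
        * (Real.sqrt 2 / Real.sqrt 3) : ℝ) : ℂ) + ((1 / Real.sqrt 3 * (Real.sqrt 2 / Real.sqrt 3)
        * (Real.sqrt 2 / Real.sqrt 3) : ℝ) : ℂ)) = ((2/3 : ℝ) : ℂ) := by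
      push_cast
      field_simp
      linear_combination ((9:ℂ) - 3*(((Real.sqrt 3:ℝ):ℂ) * Real.sqrt 3)) * c2 - 2*((((Real.sqrt 3:ℝ):ℂ)) * Real.sqrt 3 + 6) * c3 + 3*((((Real.sqrt 3:ℝ):ℂ)) * Real.sqrt 3)*c2 + 6*c3
    rw [this, Complex.norm_real, Real.norm_eq_abs]
    rw [abs_of_pos (by norm_num)]
    norm_num

/-- The squared entanglement eigenvalue of the W state is `4/9`,
hence `E_G(W) = 5/9`. -/
theorem wstate_geomEnt :
    sSup {r : ℝ | ∃ φ ∈ SepStates 3, r = (‖star φ ⬝ᵥ Wstate‖)^2}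
      = 4 / 9 ∧ GeomEnt 3 Wstate = 5 / 9 := by
  have hub : ∀ r ∈ {r : ℝ | ∃ φ ∈ SepStates 3, r = (‖star φ ⬝ᵥ Wstate‖)^2},
      r ≤ 4/9 := by
    rintro r ⟨φ, ⟨v, hn, hφ⟩, rfl⟩
    exact sep_upper v hn φ hφ
  have hmem : (4/9 : ℝ) ∈ {r : ℝ | ∃ φ ∈ SepStates 3,
      r = (‖star φ ⬝ᵥ Wstate‖)^2} :=
    ⟨φOpt, opt_mem.1, opt_mem.2⟩
  have hsup : sSup {r : ℝ | ∃ φ ∈ SepStates 3, r = (‖star φ ⬝ᵥ Wstate‖)^2}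
      = 4/9 :=
    le_antisymm (csSup_le ⟨_, hmem⟩ hub) (le_csSup ⟨4/9, hub⟩ hmem)
  refine ⟨hsup, ?_⟩
  rw [GeomEnt, hsup]
  norm_num
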